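/- Let X₁ and X₂ be independent copies of X. Then the symmetrized variable X₁ − X₂ satisfies P(X₁ − X₂ > x) / P(|X| > x) → 1 as x → ∞; in particular X₁ − X₂ has regularly varying right tail of index α. -/

import Mathlib

open MeasureTheory ProbabilityTheory Filter

lemma ratio_mul {f g h : ℝ → ℝ} {l1 l2 : ℝ}
    (hg : ∀ᶠ x in atTop, g x ≠ 0)
    (h1 : Tendsto (fun x => f x / g x) atTop (nhds l1))
    (h2 : Tendsto (fun x => g x / h x) atTop (nhds l2)) :
    Tendsto (fun x => f x / h x) atTop (nhds (l1 * l2)) := by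
  refine (h1.mul h2).congr' ?_
  filter_upwards [hg] with x hx
  rw [div_mul_div_comm, mul_comm (g x) (h x), mul_div_mul_right _ _ hx]

lemma tail_to_zero {Ω : Type*} [MeasurableSpace Ω] (P : Measure Ω) [IsProbabilityMeasure P]
    (s : ℝ → Set Ω) (hs : ∀ x, MeasurableSet (s x)) (hanti : Antitone s)
    (hempty : ⋂ n : ℕ, s n = ∅) :
    Tendsto (fun x => (P (s x)).toReal) atTop (nhds 0) := by
  have h0 : Tendsto (fun n : ℕ => P (s n)) atTop (nhds 0) := by
    have := MeasureTheory.tendsto_measure_iInter_atTop (μ := P) (s := fun n : ℕ => s (n : ℝ))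
      (fun n => (hs n).nullMeasurableSet)
      (fun a b hab => hanti (by exact_mod_cast hab)) ⟨0, measure_ne_top _ _⟩
    rwa [hempty, measure_empty] at this
  have h0r : Tendsto (fun n : ℕ => (P (s n)).toReal) atTop (nhds 0) := by
    simpa [Function.comp_def] using (ENNReal.tendsto_toReal (a := 0) (by simp)).comp h0
  rw [Metric.tendsto_atTop] at h0r ⊢
  intro δ hδ
  obtain ⟨N, hN⟩ := h0r δ hδ
  refine ⟨N, fun x hx => ?_⟩
  have hNN := hN N le_rfl
  have hle : (P (s x)).toReal ≤ (P (s N)).toReal :=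
    ENNReal.toReal_mono (measure_ne_top _ _) (measure_mono (hanti (by exact_mod_cast hx)))
  simp only [Real.dist_eq, sub_zero] at hNN ⊢
  rw [abs_of_nonneg ENNReal.toReal_nonneg] at hNN ⊢
  linarith

theorem stmt17
    {Ω : Type*} [MeasurableSpace Ω] (P : Measure Ω) [IsProbabilityMeasure P]
    (X X₁ X₂ : Ω → ℝ)
    (hmX : Measurable X) (hm1 : Measurable X₁) (hm2 : Measurable X₂)
    (hid1 : P.map X₁ = P.map X) (hid2 : P.map X₂ = P.map X)
    (hindep : IndepFun X₁ X₂ P)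
    (α p q : ℝ) (hα : 0 < α) (hp0 : 0 < p) (hp1 : p < 1) (hq : q = 1 - p)
    (htailp : Tendsto (fun x : ℝ =>
        (P {ω | X ω > x}).toReal / (P {ω | |X ω| > x}).toReal) atTop (nhds p))
    (htailq : Tendsto (fun x : ℝ =>
        (P {ω | X ω ≤ -x}).toReal / (P {ω | |X ω| > x}).toReal) atTop (nhds q))
    (hrv : ∀ t : ℝ, 0 < t → Tendsto (fun x : ℝ =>
        (P {ω | |X ω| > t * x}).toReal / (P {ω | |X ω| > x}).toReal)
        atTop (nhds (t ^ (-α)))) :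
    Tendsto (fun x : ℝ =>
        (P {ω | X₁ ω - X₂ ω > x}).toReal / (P {ω | |X ω| > x}).toReal) atTop (nhds 1)
    ∧
    ∀ t : ℝ, 0 < t → Tendsto (fun x : ℝ =>
        (P {ω | X₁ ω - X₂ ω > t * x}).toReal / (P {ω | X₁ ω - X₂ ω > x}).toReal)
        atTop (nhds (t ^ (-α))) := by
  -- basic distribution identities
  have hone1 : ∀ s : Set ℝ, MeasurableSet s → P (X₁ ⁻¹' s) = P (X ⁻¹' s) := by
    intro s hs
    rw [← Measure.map_apply hm1 hs, hid1, Measure.map_apply hmX hs]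
  have hone2 : ∀ s : Set ℝ, MeasurableSet s → P (X₂ ⁻¹' s) = P (X ⁻¹' s) := by
    intro s hs
    rw [← Measure.map_apply hm2 hs, hid2, Measure.map_apply hmX hs]
  have hprod : ∀ (s t : Set ℝ), MeasurableSet s → MeasurableSet t →
      P (X₁ ⁻¹' s ∩ X₂ ⁻¹' t) = P (X ⁻¹' s) * P (X ⁻¹' t) := by
    intro s t hs ht
    rw [hindep.measure_inter_preimage_eq_mul s t hs ht, hone1 s hs, hone2 t ht]
  -- tail-to-zero facts
  have hd0 : Tendsto (fun x : ℝ => (P {ω | |X ω| > x}).toReal) atTop (nhds 0) := by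
    apply tail_to_zero P (fun x => {ω | |X ω| > x})
      (fun x => hmX.abs measurableSet_Ioi)
      (fun a b hab ω hω => lt_of_le_of_lt hab hω)
    ext ω
    simp only [Set.mem_iInter, Set.mem_setOf_eq, Set.mem_empty_iff_false, iff_false, not_forall]
    obtain ⟨n, hn⟩ := exists_nat_gt |X ω|
    exact ⟨n, not_lt.2 hn.le⟩
  have hb0 : Tendsto (fun x : ℝ => (P {ω | X ω ≤ -x}).toReal) atTop (nhds 0) := by
    apply tail_to_zero P (fun x => {ω | X ω ≤ -x})
      (fun x => hmX measurableSet_Iic)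
      (fun a b hab ω hω => by simp only [Set.mem_setOf_eq] at hω ⊢; linarith)
    ext ω
    simp only [Set.mem_iInter, Set.mem_setOf_eq, Set.mem_empty_iff_false, iff_false, not_forall]
    obtain ⟨n, hn⟩ := exists_nat_gt (-(X ω))
    exact ⟨n, by push_neg; linarith⟩
  have ha0 : Tendsto (fun x : ℝ => (P {ω | X ω > x}).toReal) atTop (nhds 0) := by
    apply squeeze_zero (fun x => ENNReal.toReal_nonneg) (fun x => ?_) hd0
    refine ENNReal.toReal_mono (measure_ne_top _ _) (measure_mono (fun ω hω => ?_))
    simp only [Set.mem_setOf_eq] at hω ⊢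
    exact lt_of_lt_of_le hω (le_abs_self _)
  -- complement formulas
  have hcle : ∀ y : ℝ, (P {ω | X ω ≤ y}).toReal = 1 - (P {ω | X ω > y}).toReal := by
    intro y
    have hset : {ω | X ω ≤ y} = {ω | X ω > y}ᶜ := by ext ω; simp [not_lt]
    rw [hset, prob_compl_eq_one_sub (show MeasurableSet {ω | X ω > y} from hmX measurableSet_Ioi),
      ENNReal.toReal_sub_of_le prob_le_one (by simp)]
    simp
  have hcgt : ∀ y : ℝ, (P {ω | X ω > y}).toReal = 1 - (P {ω | X ω ≤ y}).toReal := by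
    intro y; rw [hcle y]; ring
  -- eventual positivity of denominator
  have hdpos : ∀ᶠ x in atTop, 0 < (P {ω | |X ω| > x}).toReal := by
    have h := htailp.eventually (eventually_gt_nhds hp0)
    filter_upwards [h] with x hx
    rcases eq_or_lt_of_le (ENNReal.toReal_nonneg (a := P {ω | |X ω| > x})) with h0 | h0
    · rw [← h0, div_zero] at hx; exact absurd hx (lt_irrefl 0)
    · exact h0
  have htc : ∀ c : ℝ, 0 < c → Tendsto (fun x : ℝ => c * x) atTop atTop :=
    fun c hc => Tendsto.const_mul_atTop hc tendsto_id
  -- scaled limits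
  have had : ∀ c : ℝ, 0 < c → Tendsto (fun x : ℝ =>
      (P {ω | X ω > c * x}).toReal / (P {ω | |X ω| > x}).toReal) atTop
      (nhds (p * c ^ (-α))) := by
    intro c hc
    apply ratio_mul (g := fun x => (P {ω | |X ω| > c * x}).toReal)
    · filter_upwards [(htc c hc).eventually hdpos] with x hx; exact ne_of_gt hx
    · simpa [Function.comp_def] using htailp.comp (htc c hc)
    · exact hrv c hc
  have hbd : ∀ c : ℝ, 0 < c → Tendsto (fun x : ℝ =>
      (P {ω | X ω ≤ -(c * x)}).toReal / (P {ω | |X ω| > x}).toReal) atTop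
      (nhds (q * c ^ (-α))) := by
    intro c hc
    apply ratio_mul (g := fun x => (P {ω | |X ω| > c * x}).toReal)
    · filter_upwards [(htc c hc).eventually hdpos] with x hx; exact ne_of_gt hx
    · simpa [Function.comp_def] using htailq.comp (htc c hc)
    · exact hrv c hc
  have hle_lim : ∀ c : ℝ, 0 < c → Tendsto (fun x : ℝ =>
      (P {ω | X ω ≤ c * x}).toReal) atTop (nhds 1) := by
    intro c hc
    have h1 : Tendsto (fun x : ℝ => 1 - (P {ω | X ω > c * x}).toReal) atTop (nhds (1 - 0)) :=
      tendsto_const_nhds.sub (by simpa [Function.comp_def] using ha0.comp (htc c hc))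
    simpa using h1.congr (fun x => (hcle (c * x)).symm)
  have hgt_lim : ∀ c : ℝ, 0 < c → Tendsto (fun x : ℝ =>
      (P {ω | X ω > -(c * x)}).toReal) atTop (nhds 1) := by
    intro c hc
    have h1 : Tendsto (fun x : ℝ => 1 - (P {ω | X ω ≤ -(c * x)}).toReal) atTop (nhds (1 - 0)) :=
      tendsto_const_nhds.sub (by simpa [Function.comp_def] using hb0.comp (htc c hc))
    simpa using h1.congr (fun x => (hcgt (-(c * x))).symm)
  -- upper bound on the symmetrized tail
  have hupper : ∀ ε : ℝ, 0 < ε → ∀ x : ℝ,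
      (P {ω | X₁ ω - X₂ ω > x}).toReal ≤
        (P {ω | X ω > (1 - ε) * x}).toReal + (P {ω | X ω ≤ -((1 - ε) * x)}).toReal +
        (P {ω | |X ω| > ε * x}).toReal * (P {ω | |X ω| > ε * x}).toReal := by
    intro ε hε x
    have hsub : {ω | X₁ ω - X₂ ω > x} ⊆
        (X₁ ⁻¹' Set.Ioi ((1 - ε) * x)) ∪ (X₂ ⁻¹' Set.Iic (-((1 - ε) * x))) ∪
        (X₁ ⁻¹' Set.Ioi (ε * x) ∩ X₂ ⁻¹' Set.Iio (-(ε * x))) := by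
      intro ω hω
      simp only [Set.mem_setOf_eq, Set.mem_union, Set.mem_inter_iff, Set.mem_preimage,
        Set.mem_Ioi, Set.mem_Iio, Set.mem_Iic] at hω ⊢
      by_contra hcon
      push_neg at hcon
      obtain ⟨⟨h1, h2⟩, h3⟩ := hcon
      rcases le_or_gt (X₁ ω) (ε * x) with h4 | h4
      · linarith
      · have h5 := h3 h4; linarith
    have hkey : P {ω | X₁ ω - X₂ ω > x} ≤
        P (X₁ ⁻¹' Set.Ioi ((1 - ε) * x)) + P (X₂ ⁻¹' Set.Iic (-((1 - ε) * x))) +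
        P (X₁ ⁻¹' Set.Ioi (ε * x) ∩ X₂ ⁻¹' Set.Iio (-(ε * x))) :=
      le_trans (measure_mono hsub) (le_trans (measure_union_le _ _)
        (add_le_add (measure_union_le _ _) le_rfl))
    have hkeyr := ENNReal.toReal_mono
      (by exact ENNReal.add_ne_top.2 ⟨ENNReal.add_ne_top.2 ⟨measure_ne_top _ _, measure_ne_top _ _⟩, measure_ne_top _ _⟩) hkey
    rw [ENNReal.toReal_add (ENNReal.add_ne_top.2 ⟨measure_ne_top _ _, measure_ne_top _ _⟩)
      (measure_ne_top _ _),
      ENNReal.toReal_add (measure_ne_top _ _) (measure_ne_top _ _)] at hkeyr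
    refine le_trans hkeyr ?_
    have e1 : P (X₁ ⁻¹' Set.Ioi ((1 - ε) * x)) = P {ω | X ω > (1 - ε) * x} :=
      hone1 _ measurableSet_Ioi
    have e2 : P (X₂ ⁻¹' Set.Iic (-((1 - ε) * x))) = P {ω | X ω ≤ -((1 - ε) * x)} :=
      hone2 _ measurableSet_Iic
    have e3 : P (X₁ ⁻¹' Set.Ioi (ε * x) ∩ X₂ ⁻¹' Set.Iio (-(ε * x))) =
        P (X ⁻¹' Set.Ioi (ε * x)) * P (X ⁻¹' Set.Iio (-(ε * x))) :=
      hprod _ _ measurableSet_Ioi measurableSet_Iio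
    rw [e1, e2, e3, ENNReal.toReal_mul]
    have f1 : (P (X ⁻¹' Set.Ioi (ε * x))).toReal ≤ (P {ω | |X ω| > ε * x}).toReal := by
      refine ENNReal.toReal_mono (measure_ne_top _ _) (measure_mono (fun ω hω => ?_))
      simp only [Set.mem_preimage, Set.mem_Ioi] at hω
      simp only [Set.mem_setOf_eq]
      exact lt_of_lt_of_le hω (le_abs_self _)
    have f2 : (P (X ⁻¹' Set.Iio (-(ε * x)))).toReal ≤ (P {ω | |X ω| > ε * x}).toReal := by
      refine ENNReal.toReal_mono (measure_ne_top _ _) (measure_mono (fun ω hω => ?_))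
      simp only [Set.mem_preimage, Set.mem_Iio] at hω
      simp only [Set.mem_setOf_eq]
      calc ε * x < -(X ω) := by linarith
      _ ≤ |X ω| := neg_le_abs _
    exact add_le_add le_rfl (mul_le_mul f1 f2 ENNReal.toReal_nonneg ENNReal.toReal_nonneg)
  -- lower bound on the symmetrized tail
  have hlower : ∀ ε : ℝ, 0 < ε → ∀ x : ℝ,
      (P {ω | X ω > (1 + ε) * x}).toReal * (P {ω | X ω ≤ ε * x}).toReal
      + (P {ω | X ω > -(ε * x)}).toReal * (P {ω | X ω ≤ -((1 + ε) * x)}).toReal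
      - (P {ω | X ω > (1 + ε) * x}).toReal * (P {ω | X ω ≤ -((1 + ε) * x)}).toReal
      ≤ (P {ω | X₁ ω - X₂ ω > x}).toReal := by
    intro ε hε x
    set A : Set Ω := X₁ ⁻¹' Set.Ioi ((1 + ε) * x) ∩ X₂ ⁻¹' Set.Iic (ε * x) with hA
    set B : Set Ω := X₁ ⁻¹' Set.Ioi (-(ε * x)) ∩ X₂ ⁻¹' Set.Iic (-((1 + ε) * x)) with hB
    have hmB : MeasurableSet B := (hm1 measurableSet_Ioi).inter (hm2 measurableSet_Iic)
    have hsub : A ∪ B ⊆ {ω | X₁ ω - X₂ ω > x} := by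
      intro ω hω
      simp only [hA, hB, Set.mem_union, Set.mem_inter_iff, Set.mem_preimage,
        Set.mem_Ioi, Set.mem_Iic, Set.mem_setOf_eq] at hω ⊢
      rcases hω with ⟨h1, h2⟩ | ⟨h1, h2⟩ <;> linarith
    have hui : P (A ∪ B) + P (A ∩ B) = P A + P B := measure_union_add_inter A hmB
    have huir : (P (A ∪ B)).toReal + (P (A ∩ B)).toReal = (P A).toReal + (P B).toReal := by
      rw [← ENNReal.toReal_add (measure_ne_top _ _) (measure_ne_top _ _),
        ← ENNReal.toReal_add (measure_ne_top _ _) (measure_ne_top _ _), hui]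
    have hunle : (P (A ∪ B)).toReal ≤ (P {ω | X₁ ω - X₂ ω > x}).toReal :=
      ENNReal.toReal_mono (measure_ne_top _ _) (measure_mono hsub)
    have hintle : (P (A ∩ B)).toReal ≤
        (P {ω | X ω > (1 + ε) * x}).toReal * (P {ω | X ω ≤ -((1 + ε) * x)}).toReal := by
      have hsub2 : A ∩ B ⊆ X₁ ⁻¹' Set.Ioi ((1 + ε) * x) ∩ X₂ ⁻¹' Set.Iic (-((1 + ε) * x)) :=
        fun ω hω => ⟨hω.1.1, hω.2.2⟩
      have := hprod (Set.Ioi ((1 + ε) * x)) (Set.Iic (-((1 + ε) * x)))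
        measurableSet_Ioi measurableSet_Iic
      calc (P (A ∩ B)).toReal
          ≤ (P (X₁ ⁻¹' Set.Ioi ((1 + ε) * x) ∩ X₂ ⁻¹' Set.Iic (-((1 + ε) * x)))).toReal :=
            ENNReal.toReal_mono (measure_ne_top _ _) (measure_mono hsub2)
        _ = (P {ω | X ω > (1 + ε) * x}).toReal * (P {ω | X ω ≤ -((1 + ε) * x)}).toReal := by
            rw [this, ENNReal.toReal_mul]; rfl
    have hAex : (P A).toReal =
        (P {ω | X ω > (1 + ε) * x}).toReal * (P {ω | X ω ≤ ε * x}).toReal := by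
      rw [hA, hprod _ _ measurableSet_Ioi measurableSet_Iic, ENNReal.toReal_mul]; rfl
    have hBex : (P B).toReal =
        (P {ω | X ω > -(ε * x)}).toReal * (P {ω | X ω ≤ -((1 + ε) * x)}).toReal := by
      rw [hB, hprod _ _ measurableSet_Ioi measurableSet_Iic, ENNReal.toReal_mul]; rfl
    linarith
  -- Part 1
  have part1 : Tendsto (fun x : ℝ =>
      (P {ω | X₁ ω - X₂ ω > x}).toReal / (P {ω | |X ω| > x}).toReal) atTop (nhds 1) := by
    rw [Metric.tendsto_nhds]
    intro δ hδ
    -- choose ε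
    obtain ⟨ε, hε0, hε1, hUlt, hLgt⟩ :
        ∃ ε : ℝ, 0 < ε ∧ ε < 1 ∧ (1 - ε) ^ (-α) < 1 + δ ∧ 1 - δ < (1 + ε) ^ (-α) := by
      have hc1 : ContinuousAt (fun y : ℝ => y ^ (-α)) 1 :=
        Real.continuousAt_rpow_const 1 (-α) (Or.inl one_ne_zero)
      have h2m : Tendsto (fun e : ℝ => (1 : ℝ) - e) (nhds 0) (nhds 1) := by
        simpa [Pi.sub_def] using (continuous_const.sub continuous_id).tendsto (0 : ℝ)
      have h2p : Tendsto (fun e : ℝ => (1 : ℝ) + e) (nhds 0) (nhds 1) := by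
        simpa [Pi.add_def] using (continuous_const.add continuous_id).tendsto (0 : ℝ)
      have h1m : Tendsto (fun e : ℝ => (1 - e) ^ (-α)) (nhds 0) (nhds 1) := by
        have := hc1.tendsto.comp h2m
        simpa [Function.comp_def, Real.one_rpow] using this
      have h1p : Tendsto (fun e : ℝ => (1 + e) ^ (-α)) (nhds 0) (nhds 1) := by
        have := hc1.tendsto.comp h2p
        simpa [Function.comp_def, Real.one_rpow] using this
      have hev : ∀ᶠ e in nhds (0 : ℝ),
          (1 - e) ^ (-α) < 1 + δ ∧ 1 - δ < (1 + e) ^ (-α) :=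
        (h1m.eventually (eventually_lt_nhds (by linarith))).and
          (h1p.eventually (eventually_gt_nhds (by linarith)))
      rw [Metric.eventually_nhds_iff] at hev
      obtain ⟨r, hr, hball⟩ := hev
      refine ⟨min (r / 2) (1 / 2), by positivity, ?_, ?_⟩
      · exact lt_of_le_of_lt (min_le_right _ _) (by norm_num)
      · apply hball
        rw [Real.dist_eq, sub_zero, abs_of_pos (by positivity)]
        exact lt_of_le_of_lt (min_le_left _ _) (by linarith)
    have hε1' : (0 : ℝ) < 1 - ε := by linarith
    have hε2' : (0 : ℝ) < 1 + ε := by linarith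
    -- upper limit
    have hU : Tendsto (fun x : ℝ =>
        ((P {ω | X ω > (1 - ε) * x}).toReal + (P {ω | X ω ≤ -((1 - ε) * x)}).toReal +
          (P {ω | |X ω| > ε * x}).toReal * (P {ω | |X ω| > ε * x}).toReal) /
          (P {ω | |X ω| > x}).toReal) atTop (nhds ((1 - ε) ^ (-α))) := by
      have hw : Tendsto (fun x : ℝ =>
          (P {ω | |X ω| > ε * x}).toReal *
            ((P {ω | |X ω| > ε * x}).toReal / (P {ω | |X ω| > x}).toReal)) atTop
          (nhds (0 * ε ^ (-α))) :=
        (by simpa [Function.comp_def] using hd0.comp (htc ε hε0) :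
          Tendsto (fun x : ℝ => (P {ω | |X ω| > ε * x}).toReal) atTop (nhds 0)).mul (hrv ε hε0)
      have hsum := ((had (1 - ε) hε1').add (hbd (1 - ε) hε1')).add hw
      have hval : p * (1 - ε) ^ (-α) + q * (1 - ε) ^ (-α) + 0 * ε ^ (-α) = (1 - ε) ^ (-α) := by
        rw [hq]; ring
      rw [hval] at hsum
      refine hsum.congr (fun x => ?_)
      rw [add_div, add_div, mul_div_assoc]
    -- lower limit
    have hL : Tendsto (fun x : ℝ =>
        ((P {ω | X ω > (1 + ε) * x}).toReal * (P {ω | X ω ≤ ε * x}).toReal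
          + (P {ω | X ω > -(ε * x)}).toReal * (P {ω | X ω ≤ -((1 + ε) * x)}).toReal
          - (P {ω | X ω > (1 + ε) * x}).toReal * (P {ω | X ω ≤ -((1 + ε) * x)}).toReal) /
          (P {ω | |X ω| > x}).toReal) atTop (nhds ((1 + ε) ^ (-α))) := by
      have hb' : Tendsto (fun x : ℝ => (P {ω | X ω ≤ -((1 + ε) * x)}).toReal) atTop (nhds 0) := by
        simpa [Function.comp_def] using hb0.comp (htc (1 + ε) hε2')
      have hsum := (((had (1 + ε) hε2').mul (hle_lim ε hε0)).add
        ((hgt_lim ε hε0).mul (hbd (1 + ε) hε2'))).sub ((had (1 + ε) hε2').mul hb')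
      have hval : p * (1 + ε) ^ (-α) * 1 + 1 * (q * (1 + ε) ^ (-α))
          - p * (1 + ε) ^ (-α) * 0 = (1 + ε) ^ (-α) := by
        rw [hq]; ring
      rw [hval] at hsum
      refine hsum.congr (fun x => ?_)
      rw [sub_div, add_div, mul_div_right_comm, mul_div_assoc, mul_div_right_comm]
    have hUev := hU.eventually (eventually_lt_nhds hUlt)
    have hLev := hL.eventually (eventually_gt_nhds hLgt)
    filter_upwards [hUev, hLev, hdpos] with x hU' hL' hd'
    have h1 := hupper ε hε0 x
    have h2 := hlower ε hε0 x
    have hub : (P {ω | X₁ ω - X₂ ω > x}).toReal / (P {ω | |X ω| > x}).toReal ≤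
        ((P {ω | X ω > (1 - ε) * x}).toReal + (P {ω | X ω ≤ -((1 - ε) * x)}).toReal +
          (P {ω | |X ω| > ε * x}).toReal * (P {ω | |X ω| > ε * x}).toReal) /
          (P {ω | |X ω| > x}).toReal := by gcongr
    have hlb : ((P {ω | X ω > (1 + ε) * x}).toReal * (P {ω | X ω ≤ ε * x}).toReal
          + (P {ω | X ω > -(ε * x)}).toReal * (P {ω | X ω ≤ -((1 + ε) * x)}).toReal
          - (P {ω | X ω > (1 + ε) * x}).toReal * (P {ω | X ω ≤ -((1 + ε) * x)}).toReal) /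
          (P {ω | |X ω| > x}).toReal ≤
        (P {ω | X₁ ω - X₂ ω > x}).toReal / (P {ω | |X ω| > x}).toReal := by gcongr
    rw [Real.dist_eq, abs_lt]
    constructor <;> linarith
  refine ⟨part1, fun t ht => ?_⟩
  have htx := htc t ht
  have hNpos : ∀ᶠ x in atTop, 0 < (P {ω | X₁ ω - X₂ ω > x}).toReal := by
    have h := part1.eventually (eventually_gt_nhds (by norm_num : (1 / 2 : ℝ) < 1))
    filter_upwards [h, hdpos] with x h1 h2
    rcases eq_or_lt_of_le (ENNReal.toReal_nonneg (a := P {ω | X₁ ω - X₂ ω > x})) with h0 | h0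
    · rw [← h0, zero_div] at h1; norm_num at h1
    · exact h0
  have h1 : Tendsto (fun x : ℝ =>
      (P {ω | X₁ ω - X₂ ω > t * x}).toReal / (P {ω | |X ω| > t * x}).toReal) atTop (nhds 1) := by
    simpa [Function.comp_def] using part1.comp htx
  have h3 : Tendsto (fun x : ℝ =>
      (P {ω | |X ω| > x}).toReal / (P {ω | X₁ ω - X₂ ω > x}).toReal) atTop (nhds 1) := by
    have := part1.inv₀ one_ne_zero
    simpa [inv_div] using this
  have hcomb := (h1.mul (hrv t ht)).mul h3
  rw [show ((1 : ℝ) * t ^ (-α)) * 1 = t ^ (-α) by ring] at hcomb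
  refine hcomb.congr' ?_
  filter_upwards [hdpos, htx.eventually hdpos, hNpos] with x hd1 hd2 hN
  field_simp
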